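/- arXiv:2211.06042 — 4 statements merged into one kernel-verified Lean document; each statement's English description precedes it below -/
import Mathlib

section
/- Uniqueness of separating times: if S and S' are both separating times for the pair (P, Q), i.e., both satisfy that for every stopping time τ one has P ∼ Q on the trace σ-field F_τ ∩ {τ < S} and P ⊥ Q on F_τ ∩ {τ ≥ S} (and likewise with S' in place of S), then P-a.s. and Q-a.s. S = S'. -/
open MeasureTheory
open scoped ENNReal

namespace SepTime

variable {Ω : Type*}

/-- A `[0,∞]`-valued stopping time: `{τ ≤ t} ∈ F_t` for all `t ∈ [0,∞]`. -/
def IsStopTime (F : ℝ≥0∞ → MeasurableSpace Ω) (τ : Ω → ℝ≥0∞) : Prop :=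
  ∀ t : ℝ≥0∞, MeasurableSet[F t] {ω | τ ω ≤ t}

/-- An extended stopping time, with values in `[0,∞] ∪ {δ}`, modeled as `WithTop ℝ≥0∞`
where `δ = ⊤`. -/
def IsExtStopTime (F : ℝ≥0∞ → MeasurableSpace Ω) (S : Ω → WithTop ℝ≥0∞) : Prop :=
  ∀ t : ℝ≥0∞, MeasurableSet[F t] {ω | S ω ≤ (t : WithTop ℝ≥0∞)}

/-- Membership in the stopped σ-field `F_τ = {A ∈ F : A ∩ {τ ≤ t} ∈ F_t for all t}`. -/
def MemStoppedSigma (m : MeasurableSpace Ω) (F : ℝ≥0∞ → MeasurableSpace Ω)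
    (τ : Ω → ℝ≥0∞) (A : Set Ω) : Prop :=
  MeasurableSet[m] A ∧ ∀ t : ℝ≥0∞, MeasurableSet[F t] (A ∩ {ω | τ ω ≤ t})

/-- `P ∼ Q` on the trace σ-field `F_τ ∩ A`. -/
def EquivOnTrace (m : MeasurableSpace Ω) (F : ℝ≥0∞ → MeasurableSpace Ω)
    (P Q : @Measure Ω m) (τ : Ω → ℝ≥0∞) (A : Set Ω) : Prop :=
  ∀ B : Set Ω, MemStoppedSigma m F τ B → B ⊆ A → (P B = 0 ↔ Q B = 0)

/-- `P ⊥ Q` on the trace σ-field `F_τ ∩ A`. -/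
def SingOnTrace (m : MeasurableSpace Ω) (F : ℝ≥0∞ → MeasurableSpace Ω)
    (P Q : @Measure Ω m) (τ : Ω → ℝ≥0∞) (A : Set Ω) : Prop :=
  ∃ B : Set Ω, MemStoppedSigma m F τ B ∧ B ⊆ A ∧ P (A \ B) = 0 ∧ Q B = 0

/-- `S` is a separating time for `(P, Q)`: for every stopping time `τ`,
`P ∼ Q` on `F_τ ∩ {τ < S}` and `P ⊥ Q` on `F_τ ∩ {τ ≥ S}`. -/
def IsSepTime (m : MeasurableSpace Ω) (F : ℝ≥0∞ → MeasurableSpace Ω)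
    (P Q : @Measure Ω m) (S : Ω → WithTop ℝ≥0∞) : Prop :=
  ∀ τ : Ω → ℝ≥0∞, IsStopTime F τ →
    EquivOnTrace m F P Q τ {ω | (τ ω : WithTop ℝ≥0∞) < S ω} ∧
    SingOnTrace m F P Q τ {ω | S ω ≤ (τ ω : WithTop ℝ≥0∞)}

/-- Right-continuity of the filtration: `F_t = ⋂_{s > t} F_s`. -/
def RightContinuousFiltration (F : ℝ≥0∞ → MeasurableSpace Ω) : Prop :=
  ∀ t : ℝ≥0∞, t ≠ ∞ → F t = ⨅ s ∈ Set.Ioi t, F s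

end SepTime
namespace SepTime

variable {Ω : Type*}

lemma constStopTime (F : ℝ≥0∞ → MeasurableSpace Ω) (t : ℝ≥0∞) :
    IsStopTime F (fun _ => t) := by
  intro s
  by_cases h : t ≤ s
  · have : {ω : Ω | (fun _ => t) ω ≤ s} = Set.univ := by ext ω; simpa using h
    rw [this]; exact @MeasurableSet.univ _ (F s)
  · have : {ω : Ω | (fun _ => t) ω ≤ s} = ∅ := by ext ω; simpa using h
    rw [this]; exact @MeasurableSet.empty _ (F s)

lemma memStopped_const {m : MeasurableSpace Ω} {F : ℝ≥0∞ → MeasurableSpace Ω}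
    (hmono : Monotone F) (hle : ∀ t, F t ≤ m) {t : ℝ≥0∞} {C : Set Ω}
    (hC : MeasurableSet[F t] C) : MemStoppedSigma m F (fun _ => t) C := by
  refine ⟨hle t _ hC, fun s => ?_⟩
  by_cases h : t ≤ s
  · have h1 : {ω : Ω | (fun _ => t) ω ≤ s} = Set.univ := by ext ω; simpa using h
    rw [h1, Set.inter_univ]; exact hmono h _ hC
  · have h1 : {ω : Ω | (fun _ => t) ω ≤ s} = ∅ := by ext ω; simpa using h
    rw [h1, Set.inter_empty]; exact @MeasurableSet.empty _ (F s)

lemma key {m : MeasurableSpace Ω} {F : ℝ≥0∞ → MeasurableSpace Ω}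
    (hmono : Monotone F) (hle : ∀ t, F t ≤ m) {P Q : Measure Ω}
    {S S' : Ω → WithTop ℝ≥0∞} (hS : IsExtStopTime F S) (hS' : IsExtStopTime F S')
    (hsep : IsSepTime m F P Q S) (hsep' : IsSepTime m F P Q S') (t : ℝ≥0∞) :
    P {ω | S' ω ≤ (t : WithTop ℝ≥0∞) ∧ (t : WithTop ℝ≥0∞) < S ω} = 0 ∧
    Q {ω | S' ω ≤ (t : WithTop ℝ≥0∞) ∧ (t : WithTop ℝ≥0∞) < S ω} = 0 := by
  obtain ⟨hEq, -⟩ := hsep (fun _ => t) (constStopTime F t)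
  obtain ⟨-, hSing⟩ := hsep' (fun _ => t) (constStopTime F t)
  obtain ⟨B, hB, hBsub, hPAB, hQB⟩ := hSing
  have hBt : MeasurableSet[F t] B := by simpa using hB.2 t
  have hSt : MeasurableSet[F t] {ω | (t : WithTop ℝ≥0∞) < S ω} := by
    have h1 : {ω | (t : WithTop ℝ≥0∞) < S ω} = {ω | S ω ≤ (t : WithTop ℝ≥0∞)}ᶜ := by
      ext ω; simp [not_le]
    rw [h1]; exact (hS t).compl
  have hS't : MeasurableSet[F t] {ω | S' ω ≤ (t : WithTop ℝ≥0∞)} := hS' t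
  set C := B ∩ {ω | (t : WithTop ℝ≥0∞) < S ω} with hCdef
  set D := ({ω | S' ω ≤ (t : WithTop ℝ≥0∞)} \ B) ∩ {ω | (t : WithTop ℝ≥0∞) < S ω} with hDdef
  have hQC : Q C = 0 := measure_mono_null Set.inter_subset_left hQB
  have hPC : P C = 0 := by
    refine (hEq C (memStopped_const hmono hle (hBt.inter hSt)) ?_).2 hQC
    exact Set.inter_subset_right
  have hPD : P D = 0 := measure_mono_null Set.inter_subset_left hPAB
  have hQD : Q D = 0 := by
    refine (hEq D (memStopped_const hmono hle ((hS't.diff hBt).inter hSt)) ?_).1 hPD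
    exact Set.inter_subset_right
  constructor
  · refine measure_mono_null (t := ({ω | S' ω ≤ (t : WithTop ℝ≥0∞)} \ B) ∪ C) ?_
      (measure_union_null hPAB hPC)
    rintro ω ⟨h1, h2⟩
    by_cases hωB : ω ∈ B
    · exact Or.inr ⟨hωB, h2⟩
    · exact Or.inl ⟨h1, hωB⟩
  · refine measure_mono_null (t := B ∪ D) ?_ (measure_union_null hQB hQD)
    rintro ω ⟨h1, h2⟩
    by_cases hωB : ω ∈ B
    · exact Or.inl hωB
    · exact Or.inr ⟨⟨h1, hωB⟩, h2⟩

/-- countable set of separating levels -/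
def Tset : Set ℝ≥0∞ := insert ∞ (Set.range fun q : ℚ => ((Real.toNNReal q : ℝ≥0∞)))

lemma Tset_countable : (Tset).Countable := (Set.countable_range _).insert _

lemma exists_mid {a b : WithTop ℝ≥0∞} (h : a < b) :
    ∃ t ∈ Tset, a ≤ (t : WithTop ℝ≥0∞) ∧ (t : WithTop ℝ≥0∞) < b := by
  obtain ⟨x, rfl⟩ : ∃ x : ℝ≥0∞, a = (x : WithTop ℝ≥0∞) := ⟨a.untop h.ne_top, (WithTop.coe_untop _ _).symm⟩
  cases b with
  | top =>
      exact ⟨∞, Set.mem_insert _ _, WithTop.coe_le_coe.2 le_top, WithTop.coe_lt_top _⟩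
  | coe y =>
      have hxy : x < y := WithTop.coe_lt_coe.1 h
      obtain ⟨q, hq0, hxq, hqy⟩ := ENNReal.lt_iff_exists_rat_btwn.1 hxy
      exact ⟨(Real.toNNReal q : ℝ≥0∞), Set.mem_insert_of_mem _ ⟨q, rfl⟩,
        WithTop.coe_le_coe.2 hxq.le, WithTop.coe_lt_coe.2 hqy⟩

end SepTime

/-- **Uniqueness of separating times.** If `S` and `S'` are both separating times for the
pair `(P, Q)` on a filtered space with a right-continuous filtration, then `P`-a.s. and
`Q`-a.s. `S = S'`. -/
theorem separating_time_unique {Ω : Type*} [m : MeasurableSpace Ω]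
    (F : ℝ≥0∞ → MeasurableSpace Ω) (hmono : Monotone F) (hle : ∀ t, F t ≤ m)
    (hrc : SepTime.RightContinuousFiltration F)
    (P Q : Measure Ω) [IsProbabilityMeasure P] [IsProbabilityMeasure Q]
    (S S' : Ω → WithTop ℝ≥0∞)
    (hS : SepTime.IsExtStopTime F S) (hS' : SepTime.IsExtStopTime F S')
    (hsep : SepTime.IsSepTime m F P Q S) (hsep' : SepTime.IsSepTime m F P Q S') :
    (∀ᵐ ω ∂P, S ω = S' ω) ∧ (∀ᵐ ω ∂Q, S ω = S' ω) := by
  have hsub : {ω | ¬ S ω = S' ω} ⊆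
      ⋃ t ∈ SepTime.Tset, ({ω | S' ω ≤ (t : WithTop ℝ≥0∞) ∧ (t : WithTop ℝ≥0∞) < S ω}
        ∪ {ω | S ω ≤ (t : WithTop ℝ≥0∞) ∧ (t : WithTop ℝ≥0∞) < S' ω}) := by
    intro ω hω
    rcases lt_or_gt_of_ne hω with h | h
    · obtain ⟨t, htT, h1, h2⟩ := SepTime.exists_mid h
      exact Set.mem_biUnion htT (Or.inr ⟨h1, h2⟩)
    · obtain ⟨t, htT, h1, h2⟩ := SepTime.exists_mid h
      exact Set.mem_biUnion htT (Or.inl ⟨h1, h2⟩)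
  have hnull : ∀ μ : Measure Ω, (∀ t : ℝ≥0∞,
      μ {ω | S' ω ≤ (t : WithTop ℝ≥0∞) ∧ (t : WithTop ℝ≥0∞) < S ω} = 0 ∧
      μ {ω | S ω ≤ (t : WithTop ℝ≥0∞) ∧ (t : WithTop ℝ≥0∞) < S' ω} = 0) →
      μ {ω | ¬ S ω = S' ω} = 0 := by
    intro μ hμ
    refine measure_mono_null hsub ?_
    rw [measure_biUnion_null_iff SepTime.Tset_countable]
    intro t _
    exact measure_union_null (hμ t).1 (hμ t).2
  constructor
  · rw [Filter.eventually_iff, ← compl_compl {ω | S ω = S' ω}, mem_ae_iff, compl_compl]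
    exact hnull P fun t => ⟨(SepTime.key hmono hle hS hS' hsep hsep' t).1,
      (SepTime.key hmono hle hS' hS hsep' hsep t).1⟩
  · rw [Filter.eventually_iff, ← compl_compl {ω | S ω = S' ω}, mem_ae_iff, compl_compl]
    exact hnull Q fun t => ⟨(SepTime.key hmono hle hS hS' hsep hsep' t).2,
      (SepTime.key hmono hle hS' hS hsep' hsep t).2⟩
end

section
/- If S is a separating time for (P, Q), then the following are equivalent: (a) P ⊥ Q on F_0; (b) P(S = 0) = 1 and Q(S = 0) = 1; (c) P(S = 0) = 1. -/
open MeasureTheory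
open scoped ENNReal

/-- If `S` is a separating time for `(P, Q)`, the following are equivalent:
(a) `P ⊥ Q` on `F_0`; (b) `P(S = 0) = 1` and `Q(S = 0) = 1`; (c) `P(S = 0) = 1`. -/
theorem mutuallySingular_on_F0_iff_separatingTime_eq_zero {Ω : Type*} [m : MeasurableSpace Ω]
    (F : ℝ≥0∞ → MeasurableSpace Ω) (hmono : Monotone F) (hle : ∀ t, F t ≤ m)
    (hrc : SepTime.RightContinuousFiltration F)
    (P Q : Measure Ω) [IsProbabilityMeasure P] [IsProbabilityMeasure Q]
    (S : Ω → WithTop ℝ≥0∞)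
    (hS : SepTime.IsExtStopTime F S)
    (hsep : SepTime.IsSepTime m F P Q S) :
    ((∃ B : Set Ω, MeasurableSet[F 0] B ∧ P B = 0 ∧ Q Bᶜ = 0) ↔
      (P {ω | S ω = ((0 : ℝ≥0∞) : WithTop ℝ≥0∞)} = 1 ∧
       Q {ω | S ω = ((0 : ℝ≥0∞) : WithTop ℝ≥0∞)} = 1)) ∧
    ((∃ B : Set Ω, MeasurableSet[F 0] B ∧ P B = 0 ∧ Q Bᶜ = 0) ↔
      P {ω | S ω = ((0 : ℝ≥0∞) : WithTop ℝ≥0∞)} = 1) := by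
  classical
  set Z : Set Ω := {ω | S ω = ((0 : ℝ≥0∞) : WithTop ℝ≥0∞)} with hZdef
  have hZle : Z = {ω | S ω ≤ ((0 : ℝ≥0∞) : WithTop ℝ≥0∞)} := by
    ext ω
    simp only [hZdef, Set.mem_setOf_eq, WithTop.coe_zero, le_zero_iff, nonpos_iff_eq_zero]
  have hτ : SepTime.IsStopTime F (fun _ => (0 : ℝ≥0∞)) := by
    intro t
    have h : {ω : Ω | (fun _ : Ω => (0 : ℝ≥0∞)) ω ≤ t} = Set.univ := by
      ext ω; simp
    rw [h]; exact MeasurableSet.univ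
  obtain ⟨hequiv, hsing⟩ := hsep (fun _ => 0) hτ
  have hZmeas0 : MeasurableSet[F 0] Z := by rw [hZle]; exact hS 0
  have hZmeas : MeasurableSet Z := hle 0 _ hZmeas0
  have hmem : ∀ B : Set Ω, MeasurableSet[F 0] B →
      SepTime.MemStoppedSigma m F (fun _ => 0) B := by
    intro B hB
    refine ⟨hle 0 _ hB, fun t => ?_⟩
    have h : B ∩ {ω : Ω | (fun _ : Ω => (0 : ℝ≥0∞)) ω ≤ t} = B := by
      simp
    rw [h]; exact hmono (zero_le : (0 : ℝ≥0∞) ≤ t) _ hB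
  have hZc : Zᶜ = {ω : Ω | (((fun _ : Ω => (0 : ℝ≥0∞)) ω : WithTop ℝ≥0∞)) < S ω} := by
    ext ω
    simp only [hZle, Set.mem_compl_iff, Set.mem_setOf_eq, not_le]
  -- (c) ⇒ (a)
  have h_c_a : P Z = 1 → ∃ B : Set Ω, MeasurableSet[F 0] B ∧ P B = 0 ∧ Q Bᶜ = 0 := by
    intro hP
    obtain ⟨B, hBmem, hBsub, hPdiff, hQB⟩ := hsing
    have hBsub' : B ⊆ Z := by rw [hZle]; exact hBsub
    have hB0 : MeasurableSet[F 0] B := by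
      have := hBmem.2 0
      have h : B ∩ {ω : Ω | (fun _ : Ω => (0 : ℝ≥0∞)) ω ≤ 0} = B := by simp
      rwa [h] at this
    refine ⟨Bᶜ, hB0.compl, ?_, by rwa [compl_compl]⟩
    have hPZc : P Zᶜ = 0 := by
      rw [prob_compl_eq_zero_iff hZmeas]; exact hP
    have hsub : Bᶜ ⊆ Zᶜ ∪ (Z \ B) := by
      intro ω hω
      by_cases hz : ω ∈ Z
      · exact Or.inr ⟨hz, hω⟩
      · exact Or.inl hz
    refine le_antisymm ?_ zero_le
    calc P Bᶜ ≤ P (Zᶜ ∪ (Z \ B)) := measure_mono hsub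
      _ ≤ P Zᶜ + P (Z \ B) := measure_union_le _ _
      _ = 0 := by
          rw [hPZc]
          have : P (Z \ B) = 0 := by
            have h : Z \ B = {ω : Ω | S ω ≤ ((fun _ : Ω => (0:ℝ≥0∞)) ω : WithTop ℝ≥0∞)} \ B := by
              rw [← hZle]
            rw [h]; exact hPdiff
          rw [this, add_zero]
  -- (a) ⇒ (b)
  have h_a_b : (∃ B : Set Ω, MeasurableSet[F 0] B ∧ P B = 0 ∧ Q Bᶜ = 0) →
      P Z = 1 ∧ Q Z = 1 := by
    rintro ⟨B, hB0, hPB, hQBc⟩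
    have hBm : MeasurableSet B := hle 0 _ hB0
    have hmem1 := hmem (Bᶜ ∩ Zᶜ) (hB0.compl.inter hZmeas0.compl)
    have hmem2 := hmem (B ∩ Zᶜ) (hB0.inter hZmeas0.compl)
    have hsub1 : Bᶜ ∩ Zᶜ ⊆ {ω : Ω | (((fun _ : Ω => (0 : ℝ≥0∞)) ω : WithTop ℝ≥0∞)) < S ω} := by
      rw [← hZc]; exact Set.inter_subset_right
    have hsub2 : B ∩ Zᶜ ⊆ {ω : Ω | (((fun _ : Ω => (0 : ℝ≥0∞)) ω : WithTop ℝ≥0∞)) < S ω} := by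
      rw [← hZc]; exact Set.inter_subset_right
    have hQ1 : Q (Bᶜ ∩ Zᶜ) = 0 :=
      measure_mono_null Set.inter_subset_left hQBc
    have hP1 : P (Bᶜ ∩ Zᶜ) = 0 := (hequiv _ hmem1 hsub1).mpr hQ1
    have hP2 : P (B ∩ Zᶜ) = 0 :=
      measure_mono_null Set.inter_subset_left hPB
    have hQ2 : Q (B ∩ Zᶜ) = 0 := (hequiv _ hmem2 hsub2).mp hP2
    have hcover : Zᶜ ⊆ (Bᶜ ∩ Zᶜ) ∪ (B ∩ Zᶜ) := by
      intro ω hω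
      by_cases hb : ω ∈ B
      · exact Or.inr ⟨hb, hω⟩
      · exact Or.inl ⟨hb, hω⟩
    have hPZc : P Zᶜ = 0 := by
      refine le_antisymm ?_ zero_le
      calc P Zᶜ ≤ P ((Bᶜ ∩ Zᶜ) ∪ (B ∩ Zᶜ)) := measure_mono hcover
        _ ≤ P (Bᶜ ∩ Zᶜ) + P (B ∩ Zᶜ) := measure_union_le _ _
        _ = 0 := by rw [hP1, hP2, add_zero]
    have hQZc : Q Zᶜ = 0 := by
      refine le_antisymm ?_ zero_le
      calc Q Zᶜ ≤ Q ((Bᶜ ∩ Zᶜ) ∪ (B ∩ Zᶜ)) := measure_mono hcover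
        _ ≤ Q (Bᶜ ∩ Zᶜ) + Q (B ∩ Zᶜ) := measure_union_le _ _
        _ = 0 := by rw [hQ1, hQ2, add_zero]
    exact ⟨(prob_compl_eq_zero_iff hZmeas).mp hPZc,
           (prob_compl_eq_zero_iff hZmeas).mp hQZc⟩
  constructor
  · exact ⟨h_a_b, fun h => h_c_a h.1⟩
  · exact ⟨fun h => (h_a_b h).1, h_c_a⟩
end

section
/- Convergence of the generalized density process: (P+Q)-almost surely, Z_n → ∂P/∂Q as n → ∞, where Z_n is the generalized Radon–Nikodym derivative of P|_{F_n} with respect to Q|_{F_n} and ∂P/∂Q is the generalized Radon–Nikodym derivative of P with respect to Q on F. -/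
open MeasureTheory Filter
open scoped ENNReal Topology

namespace GDensityAux

variable {Ω : Type*}

lemma trim_smul' {m m0 : MeasurableSpace Ω} (hm : m ≤ m0) (μ : Measure Ω) (c : ℝ≥0∞) :
    (c • μ).trim hm = c • μ.trim hm := by
  refine @Measure.ext _ m _ _ fun s hs => ?_
  simp [trim_measurableSet_eq hm hs]

lemma trim_ac {m m0 : MeasurableSpace Ω} (hm : m ≤ m0) {ν μ : Measure Ω} (hνμ : ν ≪ μ) :
    ν.trim hm ≪ μ.trim hm := by
  refine @Measure.AbsolutelyContinuous.mk _ m _ _ fun s hs h0 => ?_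
  rw [trim_measurableSet_eq hm hs] at h0 ⊢
  exact hνμ h0

lemma toReal_rnDeriv_trim_ae_eq {m m0 : MeasurableSpace Ω} (hm : m ≤ m0)
    (ν μ : Measure Ω) [IsFiniteMeasure ν] [IsFiniteMeasure μ] (hνμ : ν ≪ μ) :
    (fun ω => ((ν.trim hm).rnDeriv (μ.trim hm) ω).toReal)
      =ᵐ[μ] μ[fun ω => (ν.rnDeriv μ ω).toReal | m] := by
  have hsm : StronglyMeasurable[m] fun ω => ((ν.trim hm).rnDeriv (μ.trim hm) ω).toReal :=
    (Measure.measurable_rnDeriv _ _).ennreal_toReal.stronglyMeasurable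
  have hint_trim : Integrable (fun ω => ((ν.trim hm).rnDeriv (μ.trim hm) ω).toReal)
      (μ.trim hm) := Measure.integrable_toReal_rnDeriv
  have hint : Integrable (fun ω => ((ν.trim hm).rnDeriv (μ.trim hm) ω).toReal) μ :=
    integrable_of_integrable_trim hm hint_trim
  refine ae_eq_condExp_of_forall_setIntegral_eq hm Measure.integrable_toReal_rnDeriv
    (fun s _ _ => hint.integrableOn) (fun s hs _ => ?_) hsm.aestronglyMeasurable
  rw [setIntegral_trim hm hsm hs,
    Measure.setIntegral_toReal_rnDeriv (trim_ac hm hνμ) s,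
    measureReal_def, trim_measurableSet_eq hm hs, ← measureReal_def,
    Measure.setIntegral_toReal_rnDeriv hνμ s]

end GDensityAux

/-- **Convergence of the generalized density process.** With `F = σ(⋃ F_n)`,
`(P+Q)`-a.s. `Z_n → ∂P/∂Q`, where `Z_n` is the generalized Radon–Nikodym derivative of
`P|_{F_n}` w.r.t. `Q|_{F_n}` (computed with `γ_n := (P|_{F_n} + Q|_{F_n})/2`, conventions
`0/0 := 1`, `x/0 := ∞`), and `∂P/∂Q` is the one of `P` w.r.t. `Q` on `F`
(with `γ := (P+Q)/2`). -/
theorem gdensity_process_tendsto {Ω : Type*} {m : MeasurableSpace Ω}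
    (F : ℕ → MeasurableSpace Ω) (hmono : Monotone F) (hle : ∀ n, F n ≤ m)
    (hgen : (⨆ n, F n) = m)
    (P Q : Measure Ω) [IsProbabilityMeasure P] [IsProbabilityMeasure Q] :
    ∀ᵐ ω ∂(P + Q),
      Tendsto
        (fun n : ℕ =>
          if (P.trim (hle n)).rnDeriv ((2⁻¹ : ℝ≥0∞) • (P.trim (hle n) + Q.trim (hle n))) ω = 0 ∧
             (Q.trim (hle n)).rnDeriv ((2⁻¹ : ℝ≥0∞) • (P.trim (hle n) + Q.trim (hle n))) ω = 0
          then 1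
          else (P.trim (hle n)).rnDeriv ((2⁻¹ : ℝ≥0∞) • (P.trim (hle n) + Q.trim (hle n))) ω /
               (Q.trim (hle n)).rnDeriv ((2⁻¹ : ℝ≥0∞) • (P.trim (hle n) + Q.trim (hle n))) ω)
        atTop
        (𝓝 (if P.rnDeriv ((2⁻¹ : ℝ≥0∞) • (P + Q)) ω = 0 ∧
               Q.rnDeriv ((2⁻¹ : ℝ≥0∞) • (P + Q)) ω = 0
            then 1
            else P.rnDeriv ((2⁻¹ : ℝ≥0∞) • (P + Q)) ω /
                 Q.rnDeriv ((2⁻¹ : ℝ≥0∞) • (P + Q)) ω)) := by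
  set γ : Measure Ω := (2⁻¹ : ℝ≥0∞) • (P + Q) with hγ
  haveI : IsProbabilityMeasure γ := by
    constructor
    rw [hγ, Measure.smul_apply, smul_eq_mul, Measure.add_apply, measure_univ, measure_univ,
      one_add_one_eq_two]
    exact ENNReal.inv_mul_cancel two_ne_zero ENNReal.ofNat_ne_top
  -- absolute continuity facts
  have hnull : ∀ s : Set Ω, γ s = 0 → P s = 0 ∧ Q s = 0 := by
    intro s hs
    rw [hγ, Measure.smul_apply, smul_eq_mul, Measure.add_apply] at hs
    rcases mul_eq_zero.1 hs with h | h
    · exact absurd h (by simp)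
    · exact add_eq_zero.1 h
  have hPγ : P ≪ γ := Measure.AbsolutelyContinuous.mk fun s _ h => (hnull s h).1
  have hQγ : Q ≪ γ := Measure.AbsolutelyContinuous.mk fun s _ h => (hnull s h).2
  have hPQγ : (P + Q) ≪ γ := Measure.AbsolutelyContinuous.mk fun s _ h => by
    rw [Measure.add_apply, (hnull s h).1, (hnull s h).2, add_zero]
  -- the trimmed mixture measure
  have hγtrim : ∀ n, (2⁻¹ : ℝ≥0∞) • (P.trim (hle n) + Q.trim (hle n)) = γ.trim (hle n) := by
    intro n
    rw [hγ, GDensityAux.trim_smul', trim_add]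
  simp only [hγtrim]
  -- the filtration
  let ℱ : Filtration ℕ m := ⟨F, hmono, hle⟩
  -- per-n identification with conditional expectations
  have hPall : ∀ᵐ ω ∂γ, ∀ n, ((P.trim (hle n)).rnDeriv (γ.trim (hle n)) ω).toReal
      = (γ[fun ω => (P.rnDeriv γ ω).toReal | F n]) ω :=
    ae_all_iff.2 fun n => GDensityAux.toReal_rnDeriv_trim_ae_eq (hle n) P γ hPγ
  have hQall : ∀ᵐ ω ∂γ, ∀ n, ((Q.trim (hle n)).rnDeriv (γ.trim (hle n)) ω).toReal
      = (γ[fun ω => (Q.rnDeriv γ ω).toReal | F n]) ω :=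
    ae_all_iff.2 fun n => GDensityAux.toReal_rnDeriv_trim_ae_eq (hle n) Q γ hQγ
  -- Lévy upward convergence
  have hsup : (⨆ n, ℱ n) = m := hgen
  have hPmeas : StronglyMeasurable[⨆ n, ℱ n] fun ω => (P.rnDeriv γ ω).toReal := by
    rw [hsup]
    exact (Measure.measurable_rnDeriv P γ).ennreal_toReal.stronglyMeasurable
  have hQmeas : StronglyMeasurable[⨆ n, ℱ n] fun ω => (Q.rnDeriv γ ω).toReal := by
    rw [hsup]
    exact (Measure.measurable_rnDeriv Q γ).ennreal_toReal.stronglyMeasurable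
  have hPlevy := Integrable.tendsto_ae_condExp (Measure.integrable_toReal_rnDeriv (μ := P) (ν := γ)) hPmeas
  have hQlevy := Integrable.tendsto_ae_condExp (Measure.integrable_toReal_rnDeriv (μ := Q) (ν := γ)) hQmeas
  -- finiteness
  have hPfin : ∀ᵐ ω ∂γ, ∀ n, (P.trim (hle n)).rnDeriv (γ.trim (hle n)) ω < ∞ :=
    ae_all_iff.2 fun n => ae_of_ae_trim (hle n) (Measure.rnDeriv_lt_top _ _)
  have hQfin : ∀ᵐ ω ∂γ, ∀ n, (Q.trim (hle n)).rnDeriv (γ.trim (hle n)) ω < ∞ :=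
    ae_all_iff.2 fun n => ae_of_ae_trim (hle n) (Measure.rnDeriv_lt_top _ _)
  -- the densities do not vanish simultaneously
  have h0 : ∀ᵐ ω ∂γ, ¬(P.rnDeriv γ ω = 0 ∧ Q.rnDeriv γ ω = 0) := by
    have hs : MeasurableSet {ω | P.rnDeriv γ ω = 0 ∧ Q.rnDeriv γ ω = 0} :=
      (Measure.measurable_rnDeriv P γ (measurableSet_singleton 0)).inter
        (Measure.measurable_rnDeriv Q γ (measurableSet_singleton 0))
    have hP0 : P {ω | P.rnDeriv γ ω = 0 ∧ Q.rnDeriv γ ω = 0} = 0 := by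
      rw [← Measure.setLIntegral_rnDeriv hPγ]
      have hae : ∀ᵐ x ∂γ.restrict {ω | P.rnDeriv γ ω = 0 ∧ Q.rnDeriv γ ω = 0},
          P.rnDeriv γ x = 0 := (ae_restrict_mem hs).mono fun x hx => hx.1
      rw [lintegral_congr_ae hae, lintegral_zero]
    have hQ0 : Q {ω | P.rnDeriv γ ω = 0 ∧ Q.rnDeriv γ ω = 0} = 0 := by
      rw [← Measure.setLIntegral_rnDeriv hQγ]
      have hae : ∀ᵐ x ∂γ.restrict {ω | P.rnDeriv γ ω = 0 ∧ Q.rnDeriv γ ω = 0},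
          Q.rnDeriv γ x = 0 := (ae_restrict_mem hs).mono fun x hx => hx.2
      rw [lintegral_congr_ae hae, lintegral_zero]
    have hγ0 : γ {ω | P.rnDeriv γ ω = 0 ∧ Q.rnDeriv γ ω = 0} = 0 := by
      rw [hγ, Measure.smul_apply, smul_eq_mul, Measure.add_apply, hP0, hQ0, add_zero, mul_zero]
    rw [ae_iff]
    simpa using hγ0
  -- conclude
  refine hPQγ.ae_le ?_
  filter_upwards [hPall, hQall, hPfin, hQfin, hPlevy, hQlevy, h0,
    Measure.rnDeriv_lt_top P γ, Measure.rnDeriv_lt_top Q γ]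
    with ω hPn hQn hPf hQf hPl hQl hω0 hPlt hQlt
  have htP : Tendsto (fun n => (P.trim (hle n)).rnDeriv (γ.trim (hle n)) ω) atTop
      (𝓝 (P.rnDeriv γ ω)) := by
    refine (ENNReal.tendsto_toReal_iff (fun n => (hPf n).ne) hPlt.ne).1 ?_
    exact hPl.congr fun n => (hPn n).symm
  have htQ : Tendsto (fun n => (Q.trim (hle n)).rnDeriv (γ.trim (hle n)) ω) atTop
      (𝓝 (Q.rnDeriv γ ω)) := by
    refine (ENNReal.tendsto_toReal_iff (fun n => (hQf n).ne) hQlt.ne).1 ?_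
    exact hQl.congr fun n => (hQn n).symm
  have hne : P.rnDeriv γ ω ≠ 0 ∨ Q.rnDeriv γ ω ≠ 0 := by tauto
  have hdiv := ENNReal.Tendsto.div htP hne htQ (Or.inl hQlt.ne)
  have hsumne : P.rnDeriv γ ω + Q.rnDeriv γ ω ≠ 0 := by
    simp only [ne_eq, add_eq_zero]; exact hω0
  have hev : ∀ᶠ n in atTop,
      ¬((P.trim (hle n)).rnDeriv (γ.trim (hle n)) ω = 0 ∧
        (Q.trim (hle n)).rnDeriv (γ.trim (hle n)) ω = 0) := by
    filter_upwards [(htP.add htQ).eventually_ne hsumne] with n hn h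
    exact hn (by rw [h.1, h.2, add_zero])
  rw [if_neg hω0]
  refine Tendsto.congr' ?_ hdiv
  filter_upwards [hev] with n hn
  exact (if_neg hn).symm
end

section
/- Jessen's theorem: Q-almost surely, d(P|_{F_n})^{ac}/d(Q|_{F_n}) → dP^{ac}/dQ as n → ∞, where for a probability measure α on a σ-field G, α^{ac} denotes the absolutely continuous part of α with respect to the restriction of Q to G in the Lebesgue decomposition. -/
open MeasureTheory Filter
open scoped ENNReal Topology

namespace JessenAux

variable {Ω : Type*}

/-- Radon–Nikodym derivative (in the Lebesgue decomposition sense) as a quotient of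
densities with respect to the sum. -/
lemma rnDeriv_eq_div {m : MeasurableSpace Ω} (μ ν : Measure Ω)
    [IsFiniteMeasure μ] [IsFiniteMeasure ν] :
    μ.rnDeriv ν =ᵐ[ν] fun x => μ.rnDeriv (μ + ν) x / ν.rnDeriv (μ + ν) x := by
  have hνρ : ν ≪ μ + ν := by
    refine Measure.AbsolutelyContinuous.mk fun s _ hs => ?_
    simp only [Measure.coe_add, Pi.add_apply, add_eq_zero] at hs
    exact hs.2
  have h1 := Measure.rnDeriv_mul_rnDeriv' (μ := μ) (ν := ν) (κ := μ + ν) hνρ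
  have h2 : ∀ᵐ x ∂ν, 0 < ν.rnDeriv (μ + ν) x := Measure.rnDeriv_pos hνρ
  have h3 : ∀ᵐ x ∂ν, ν.rnDeriv (μ + ν) x ≠ ∞ :=
    hνρ.ae_le (Measure.rnDeriv_ne_top ν (μ + ν))
  filter_upwards [h1, h2, h3] with x hx1 hx2 hx3
  have : μ.rnDeriv ν x * ν.rnDeriv (μ + ν) x = μ.rnDeriv (μ + ν) x := hx1
  rw [← this, mul_div_assoc, ENNReal.div_self hx2.ne' hx3, mul_one]

/-- The density of the absolutely continuous part of `μ.trim` w.r.t. `ρ.trim`, when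
`μ ≪ ρ`, is the conditional expectation of the density `dμ/dρ`. -/
lemma trim_rnDeriv_ae_eq_condexp {mn m : MeasurableSpace Ω} {μ ρ : Measure Ω}
    [IsFiniteMeasure μ] [IsFiniteMeasure ρ] (hμρ : μ ≪ ρ)
    (hle : mn ≤ m) :
    (μ.trim hle).rnDeriv (ρ.trim hle)
      =ᵐ[ρ] fun ω => ENNReal.ofReal ((ρ[fun ω' => (μ.rnDeriv ρ ω').toReal | mn]) ω) := by
  set g : Ω → ℝ := fun ω' => (μ.rnDeriv ρ ω').toReal with hg_def
  have hg_int : Integrable g ρ := Measure.integrable_toReal_rnDeriv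
  have hg_nonneg : 0 ≤ᵐ[ρ] g := Filter.Eventually.of_forall fun x => ENNReal.toReal_nonneg
  have h_ce_nonneg : 0 ≤ᵐ[ρ] ρ[g|mn] := condExp_nonneg hg_nonneg
  have hμρ_trim : μ.trim hle ≪ ρ.trim hle := hμρ.trim hle
  refine ae_eq_of_ae_eq_trim (hm := hle) ?_
  have hmeas : Measurable[mn] fun x => ENNReal.ofReal ((ρ[g|mn]) x) :=
    stronglyMeasurable_condExp.measurable.ennreal_ofReal
  refine ae_eq_of_forall_setLIntegral_eq_of_sigmaFinite
    (Measure.measurable_rnDeriv _ _) hmeas fun s hs _ => ?_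
  have h_restrict : (ρ.trim hle).restrict s = (ρ.restrict s).trim hle :=
    restrict_trim hle ρ hs
  rw [Measure.setLIntegral_rnDeriv hμρ_trim s, trim_measurableSet_eq hle hs,
    h_restrict, lintegral_trim hle hmeas]
  have h1 : ∫⁻ x in s, ENNReal.ofReal ((ρ[g|mn]) x) ∂ρ
      = ENNReal.ofReal (∫ x in s, (ρ[g|mn]) x ∂ρ) :=
    (ofReal_integral_eq_lintegral_ofReal integrable_condExp.integrableOn
      (ae_restrict_of_ae h_ce_nonneg)).symm
  have h2 : ∫ x in s, (ρ[g|mn]) x ∂ρ = ∫ x in s, g x ∂ρ :=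
    setIntegral_condExp hle hg_int hs
  have h3 : ENNReal.ofReal (∫ x in s, g x ∂ρ) = ∫⁻ x in s, ENNReal.ofReal (g x) ∂ρ :=
    ofReal_integral_eq_lintegral_ofReal hg_int.integrableOn
      (ae_restrict_of_ae hg_nonneg)
  have h4 : ∫⁻ x in s, ENNReal.ofReal (g x) ∂ρ = ∫⁻ x in s, μ.rnDeriv ρ x ∂ρ := by
    refine lintegral_congr_ae (ae_restrict_of_ae ?_)
    filter_upwards [Measure.rnDeriv_ne_top μ ρ] with x hx
    simp [hg_def, ENNReal.ofReal_toReal hx]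
  have h5 : ∫⁻ x in s, μ.rnDeriv ρ x ∂ρ = μ s := Measure.setLIntegral_rnDeriv hμρ s
  refine Eq.symm ?_
  calc ∫⁻ x in s, ENNReal.ofReal ((ρ[g|mn]) x) ∂ρ
      = ENNReal.ofReal (∫ x in s, (ρ[g|mn]) x ∂ρ) := h1
    _ = ENNReal.ofReal (∫ x in s, g x ∂ρ) := by rw [h2]
    _ = ∫⁻ x in s, ENNReal.ofReal (g x) ∂ρ := h3
    _ = ∫⁻ x in s, μ.rnDeriv ρ x ∂ρ := h4
    _ = μ s := h5

end JessenAux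

/-- **Jessen's theorem.** With `F = σ(⋃ F_n)`, `Q`-a.s.
`d(P|_{F_n})^{ac}/d(Q|_{F_n}) → dP^{ac}/dQ` as `n → ∞`, where the Radon–Nikodym
derivatives are the densities of the absolutely continuous parts in the respective
Lebesgue decompositions (this is exactly Mathlib's `Measure.rnDeriv`). -/
theorem jessen_tendsto_rnDeriv {Ω : Type*} {m : MeasurableSpace Ω}
    (F : ℕ → MeasurableSpace Ω) (hmono : Monotone F) (hle : ∀ n, F n ≤ m)
    (hgen : (⨆ n, F n) = m)
    (P Q : Measure Ω) [IsProbabilityMeasure P] [IsProbabilityMeasure Q] :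
    ∀ᵐ ω ∂Q,
      Tendsto (fun n : ℕ => (P.trim (hle n)).rnDeriv (Q.trim (hle n)) ω)
        atTop (𝓝 (P.rnDeriv Q ω)) := by
  set ρ : Measure Ω := P + Q with hρ_def
  have hPρ : P ≪ ρ := by
    refine Measure.AbsolutelyContinuous.mk fun s _ hs => ?_
    simp only [hρ_def, Measure.coe_add, Pi.add_apply, add_eq_zero] at hs
    exact hs.1
  have hQρ : Q ≪ ρ := by
    refine Measure.AbsolutelyContinuous.mk fun s _ hs => ?_
    simp only [hρ_def, Measure.coe_add, Pi.add_apply, add_eq_zero] at hs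
    exact hs.2
  let ℱ : Filtration ℕ m := { seq := F, mono' := hmono, le' := hle }
  set g : Ω → ℝ := fun ω => (P.rnDeriv ρ ω).toReal with hg_def
  set k : Ω → ℝ := fun ω => (Q.rnDeriv ρ ω).toReal with hk_def
  have hsup : (⨆ n, (ℱ n : MeasurableSpace Ω)) = m := hgen
  have hg_meas : StronglyMeasurable[⨆ n, (ℱ n : MeasurableSpace Ω)] g := by
    rw [hsup]
    exact (Measure.measurable_rnDeriv P ρ).ennreal_toReal.stronglyMeasurable
  have hk_meas : StronglyMeasurable[⨆ n, (ℱ n : MeasurableSpace Ω)] k := by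
    rw [hsup]
    exact (Measure.measurable_rnDeriv Q ρ).ennreal_toReal.stronglyMeasurable
  have hg_int : Integrable g ρ := Measure.integrable_toReal_rnDeriv
  have hk_int : Integrable k ρ := Measure.integrable_toReal_rnDeriv
  have hlevy_g : ∀ᵐ x ∂ρ, Tendsto (fun n => (ρ[g|ℱ n]) x) atTop (𝓝 (g x)) :=
    hg_int.tendsto_ae_condExp hg_meas
  have hlevy_k : ∀ᵐ x ∂ρ, Tendsto (fun n => (ρ[k|ℱ n]) x) atTop (𝓝 (k x)) :=
    hk_int.tendsto_ae_condExp hk_meas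
  have hA : ∀ n, (P.trim (hle n)).rnDeriv (ρ.trim (hle n))
      =ᵐ[Q] fun ω => ENNReal.ofReal ((ρ[g|F n]) ω) :=
    fun n => hQρ.ae_le (JessenAux.trim_rnDeriv_ae_eq_condexp hPρ (hle n))
  have hB : ∀ n, (Q.trim (hle n)).rnDeriv (ρ.trim (hle n))
      =ᵐ[Q] fun ω => ENNReal.ofReal ((ρ[k|F n]) ω) :=
    fun n => hQρ.ae_le (JessenAux.trim_rnDeriv_ae_eq_condexp hQρ (hle n))
  have hdiv : ∀ n, (P.trim (hle n)).rnDeriv (Q.trim (hle n))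
      =ᵐ[Q] fun x => (P.trim (hle n)).rnDeriv (ρ.trim (hle n)) x
        / (Q.trim (hle n)).rnDeriv (ρ.trim (hle n)) x := by
    intro n
    have h := JessenAux.rnDeriv_eq_div (P.trim (hle n)) (Q.trim (hle n))
    rw [← trim_add (hle n), ← hρ_def] at h
    exact ae_eq_of_ae_eq_trim h
  have htop : P.rnDeriv Q =ᵐ[Q] fun x => P.rnDeriv ρ x / Q.rnDeriv ρ x := by
    have h := JessenAux.rnDeriv_eq_div P Q
    rw [← hρ_def] at h
    exact h
  have hfinP : ∀ᵐ x ∂Q, P.rnDeriv ρ x ≠ ∞ := hQρ.ae_le (Measure.rnDeriv_ne_top P ρ)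
  have hfinQ : ∀ᵐ x ∂Q, Q.rnDeriv ρ x ≠ ∞ := hQρ.ae_le (Measure.rnDeriv_ne_top Q ρ)
  have hpos : ∀ᵐ x ∂Q, 0 < Q.rnDeriv ρ x := Measure.rnDeriv_pos hQρ
  filter_upwards [hQρ.ae_le hlevy_g, hQρ.ae_le hlevy_k, hfinP, hfinQ, hpos,
    ae_all_iff.2 hA, ae_all_iff.2 hB, ae_all_iff.2 hdiv, htop] with x hxg hxk
      hxfP hxfQ hxpos hxA hxB hxd hxtop
  rw [hxtop]
  have hgx : ENNReal.ofReal (g x) = P.rnDeriv ρ x := ENNReal.ofReal_toReal hxfP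
  have hkx : ENNReal.ofReal (k x) = Q.rnDeriv ρ x := ENNReal.ofReal_toReal hxfQ
  have htendA : Tendsto (fun n => (P.trim (hle n)).rnDeriv (ρ.trim (hle n)) x)
      atTop (𝓝 (P.rnDeriv ρ x)) := by
    rw [← hgx]
    exact (ENNReal.tendsto_ofReal hxg).congr fun n => (hxA n).symm
  have htendB : Tendsto (fun n => (Q.trim (hle n)).rnDeriv (ρ.trim (hle n)) x)
      atTop (𝓝 (Q.rnDeriv ρ x)) := by
    rw [← hkx]
    exact (ENNReal.tendsto_ofReal hxk).congr fun n => (hxB n).symm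
  have hdivT := ENNReal.Tendsto.div htendA (Or.inr hxpos.ne') htendB (Or.inr hxfP)
  exact hdivT.congr fun n => (hxd n).symm
end
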